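/- The C-bound: If E[M] > 0, where M = y·H(x) is the margin random variable of a majority vote, then the risk P(M ≤ 0) is at most 1 − (E[M])² / E[M²]. -/

import Mathlib

open MeasureTheory

/-- The C-bound: let `D` be a probability distribution over `X × {-1,1}` and
`M(x,y) = y·H(x)` the margin of the vote `sign ∘ H`. If `E[M] > 0` (with
`M` of finite, positive second moment), then the risk `P(M ≤ 0)` is at most
`1 - (E[M])²/E[M²]`. -/
theorem c_bound
    {X : Type*} [MeasurableSpace X] (D : Measure (X × ℝ)) [IsProbabilityMeasure D]
    (hlabel : ∀ᵐ p ∂D, p.2 = 1 ∨ p.2 = -1)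
    (H : X → ℝ) (hH : Measurable H)
    (M : X × ℝ → ℝ) (hM : M = fun p => p.2 * H p.1)
    (hL2 : MemLp M 2 D)
    (hpos : 0 < ∫ p, M p ∂D) (hpos2 : 0 < ∫ p, (M p) ^ 2 ∂D) :
    (D {p | M p ≤ 0}).toReal ≤ 1 - (∫ p, M p ∂D) ^ 2 / ∫ p, (M p) ^ 2 ∂D := by
  have hMmeas : Measurable M := by
    rw [hM]; exact measurable_snd.mul (hH.comp measurable_fst)
  set A : Set (X × ℝ) := {p | 0 < M p} with hA
  have hAmeas : MeasurableSet A := measurableSet_lt measurable_const hMmeas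
  set f : X × ℝ → ℝ := fun p => max (M p) 0 with hf
  set g : X × ℝ → ℝ := A.indicator (fun _ => (1:ℝ)) with hg
  have hfmeas : Measurable f := hMmeas.max measurable_const
  have hfg : ∀ p, f p * g p = f p := by
    intro p
    by_cases hp : 0 < M p
    · have hpA : p ∈ A := hp
      have : g p = 1 := by simp [hg, Set.indicator_of_mem hpA]
      simp [this]
    · have : f p = 0 := by simp [hf, le_of_not_gt hp]
      simp [this]
  have hfL2 : MemLp f 2 D := by
    refine hL2.of_le hfmeas.aestronglyMeasurable ?_
    filter_upwards with p
    rcases le_or_gt (M p) 0 with h | h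
    · simp [hf, max_eq_right h]
    · simp [hf, max_eq_left h.le]
  have hgL2 : MemLp g 2 D := by
    exact MemLp.indicator hAmeas (memLp_const 1)
  have hconj : Real.HolderConjugate 2 2 := Real.HolderConjugate.two_two
  have hholder := integral_mul_le_Lp_mul_Lq_of_nonneg hconj
    (f := f) (g := g) (Filter.Eventually.of_forall fun p => le_max_right _ _)
    (Filter.Eventually.of_forall fun p => Set.indicator_nonneg (fun _ _ => zero_le_one) p)
    (by simpa using hfL2) (by simpa using hgL2)
  -- convert rpow to pow
  have hrf : ∫ p, f p ^ (2:ℝ) ∂D = ∫ p, f p ^ 2 ∂D := by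
    apply integral_congr_ae; filter_upwards with p
    rw [show ((2:ℝ)) = ((2:ℕ):ℝ) by norm_num, Real.rpow_natCast]
  have hrg : ∫ p, g p ^ (2:ℝ) ∂D = (D A).toReal := by
    have : ∀ p, g p ^ (2:ℝ) = g p := by
      intro p
      by_cases hp : p ∈ A
      · simp [hg, Set.indicator_of_mem hp]
      · simp [hg, Set.indicator_of_notMem hp, Real.zero_rpow (by norm_num : (2:ℝ) ≠ 0)]
    rw [integral_congr_ae (Filter.Eventually.of_forall this)]
    simp [hg, integral_indicator hAmeas, Measure.real]
  have hMint : Integrable M D := hL2.integrable (by norm_num)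
  have hfint : Integrable f D := hfL2.integrable (by norm_num)
  have hM2int : Integrable (fun p => M p ^ 2) D := by
    have := hL2.integrable_sq
    simpa [Pi.pow_apply] using this
  have hf2int : Integrable (fun p => f p ^ 2) D := by
    have := hfL2.integrable_sq
    simpa [Pi.pow_apply] using this
  have h1 : ∫ p, M p ∂D ≤ ∫ p, f p ∂D :=
    integral_mono hMint hfint fun p => le_max_left _ _
  have h2 : ∫ p, f p ∂D = ∫ p, f p * g p ∂D := by
    apply integral_congr_ae; filter_upwards with p; rw [hfg p]
  have hfsq_le : ∫ p, f p ^ 2 ∂D ≤ ∫ p, M p ^ 2 ∂D := by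
    apply integral_mono hf2int hM2int
    intro p
    have : |f p| ≤ |M p| := by
      rcases le_or_gt (M p) 0 with h | h
      · simp [hf, max_eq_right h]
      · simp [hf, max_eq_left h.le]
    calc f p ^ 2 = |f p| ^ 2 := (sq_abs _).symm
      _ ≤ |M p| ^ 2 := by gcongr
      _ = M p ^ 2 := sq_abs _
  set a := ∫ p, M p ∂D with ha
  set b := ∫ p, M p ^ 2 ∂D with hb
  set t := (D A).toReal with ht
  have htnn : 0 ≤ t := ENNReal.toReal_nonneg
  have hkey : a ≤ Real.sqrt b * Real.sqrt t := by
    calc a ≤ ∫ p, f p * g p ∂D := h2 ▸ h1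
      _ ≤ (∫ p, f p ^ (2:ℝ) ∂D) ^ (1/(2:ℝ)) * (∫ p, g p ^ (2:ℝ) ∂D) ^ (1/(2:ℝ)) := hholder
      _ = (∫ p, f p ^ 2 ∂D) ^ (1/(2:ℝ)) * t ^ (1/(2:ℝ)) := by rw [hrf, hrg]
      _ ≤ b ^ (1/(2:ℝ)) * t ^ (1/(2:ℝ)) := by
          gcongr
      _ = Real.sqrt b * Real.sqrt t := by
          rw [Real.sqrt_eq_rpow, Real.sqrt_eq_rpow]
  have hsq : a ^ 2 ≤ b * t := by
    have h := pow_le_pow_left₀ hpos.le hkey 2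
    rwa [mul_pow, Real.sq_sqrt hpos2.le, Real.sq_sqrt htnn] at h
  have hdiv : a ^ 2 / b ≤ t := by
    rw [div_le_iff₀ hpos2]
    linarith [hsq]
  have hcompl : {p | M p ≤ 0} = Aᶜ := by
    ext p; simp [hA, not_lt]
  rw [hcompl]
  have : (D Aᶜ).toReal = 1 - t := by
    rw [measure_compl hAmeas (measure_ne_top D A), measure_univ]
    rw [ENNReal.toReal_sub_of_le prob_le_one ENNReal.one_ne_top, ENNReal.toReal_one]
  rw [this]
  linarith
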